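/- For all lists of rose trees ts and us: if concatMap polish ts = concatMap polish us and ts and us have the same length, then ts = us. (A forest of known size is uniquely recoverable from the concatenation of the Polish encodings of its trees.) -/

import Mathlib

/-- Rose trees: a node carries a label and a finite list of children. -/
inductive RTree (α : Type) where
  | node : α → List (RTree α) → RTree α

/-- The Polish encoding of a rose tree:
`polish (node x ts) = (length ts, x) :: concatMap polish ts`. -/
def polish {α : Type} : RTree α → List (ℕ × α)
  | .node x ts => (ts.length, x) :: (ts.attach.map fun ⟨t, _⟩ => polish t).flatten

lemma polish_node {α : Type} (x : α) (ts : List (RTree α)) :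
    polish (.node x ts) = (ts.length, x) :: (ts.map polish).flatten := by
  rw [polish]
  congr 1
  congr 1
  rw [← List.attach_map_val (l := ts) (f := polish)]

lemma polish_forest_aux {α : Type} : ∀ n (ts us : List (RTree α)),
    ((ts.map polish).flatten).length = n →
    (ts.map polish).flatten = (us.map polish).flatten →
    ts.length = us.length → ts = us := by
  intro n
  induction n using Nat.strong_induction_on with
  | _ n ih =>
    intro ts us hn h hlen
    match ts, us with
    | [], [] => rfl
    | .node x cs :: ts, .node y ds :: us =>
      simp only [List.map_cons, List.flatten_cons, polish_node, List.cons_append,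
        List.cons.injEq, Prod.mk.injEq] at h
      obtain ⟨⟨hcd, hxy⟩, h⟩ := h
      rw [← List.flatten_append, ← List.map_append, ← List.flatten_append, ← List.map_append] at h
      have hkey : cs ++ ts = ds ++ us := by
        refine ih (((cs ++ ts).map polish).flatten).length ?_ _ _ rfl h (by simp at hlen ⊢; omega)
        subst hn
        simp [polish_node]
      obtain ⟨h1, h2⟩ := List.append_inj hkey hcd
      subst hxy h1 h2
      rfl

/-- A forest of known size is uniquely recoverable from the concatenation of the Polish
encodings of its trees. -/
theorem polish_forest_inj {α : Type} (ts us : List (RTree α))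
    (h : (ts.map polish).flatten = (us.map polish).flatten)
    (hlen : ts.length = us.length) : ts = us :=
  polish_forest_aux _ ts us rfl h hlen
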